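/- Let G = A * B with a ∈ A of order ≥ 3 and b ∈ B nontrivial. For n ≥ 1 set g_n = v w v w² ⋯ v wⁿ v where v = ba and w = ba⁻¹. Then for every n: d_0(g_n) = 0, d_k(g_n) = 1 for 1 ≤ k ≤ n, d_k(g_n) = 0 for k > n, and d*_k(g_n) = 0 for all k ≥ 2; consequently Δ₁(g_n) ≥ n − 1. -/

import Mathlib

open Monoid Monoid.CoprodI

attribute [local instance] Classical.propDecidable

/-- The list of syllables of the reduced word representing `g`. -/
noncomputable def syllables {ι : Type*} {M : ι → Type*} [∀ i, Group (M i)]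
    (g : CoprodI M) : List (Σ i, M i) :=
  letI := Classical.decEq ι
  letI : ∀ i, DecidableEq (M i) := fun _ => Classical.decEq _
  (Word.equiv g).toList

/-- `g` is a palindrome iff its reduced word reads the same backwards. -/
noncomputable def IsPalindrome {ι : Type*} {M : ι → Type*} [∀ i, Group (M i)]
    (g : CoprodI M) : Prop :=
  (syllables g).reverse = syllables g

/-- `segCount s k g` is the number of `s`-segments of syllable length `2k+1`
in the reduced form of `g`: pairs of consecutive occurrences of the syllable `s`
at distance `2k+2` in the syllable list. -/
noncomputable def segCount {ι : Type*} {M : ι → Type*} [∀ i, Group (M i)]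
    (s : Σ i, M i) (k : ℕ) (g : CoprodI M) : ℕ :=
  ((Finset.range (syllables g).length ×ˢ Finset.range (syllables g).length).filter
    (fun pq => pq.1 < pq.2 ∧ (syllables g)[pq.1]? = some s ∧ (syllables g)[pq.2]? = some s ∧
      (∀ r ∈ Finset.Ioo pq.1 pq.2, (syllables g)[r]? ≠ some s) ∧ pq.2 - pq.1 = 2*k+2)).card

/-- The quasi-homomorphism `Δ₁`: the (finite) sum over `k` of the residue mod 2
of `t_k(g) = d_k(g) - d*_k(g)`. -/
noncomputable def Delta1 {M : Bool → Type*} [∀ b, Group (M b)]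
    (a : M true) (g : CoprodI M) : ℕ :=
  ∑ᶠ k : ℕ, if Odd ((segCount ⟨true, a⟩ k g : ℤ) - segCount ⟨true, a⁻¹⟩ k g)
    then 1 else 0


/-- positions of `a` in the reduced word -/
def posf (i : ℕ) : ℕ := i*i + 3*i + 1

def apos (p : ℕ) : Prop := ∃ i : ℕ, p = posf i

def wlen (n : ℕ) : ℕ := n*n + 3*n + 2

lemma posf_lt_posf {i j : ℕ} : posf i < posf j ↔ i < j := by
  unfold posf
  constructor <;> intro h <;> nlinarith

lemma posf_le_posf {i j : ℕ} (h : i ≤ j) : posf i ≤ posf j := by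
  rcases eq_or_lt_of_le h with rfl | h'
  · rfl
  · exact le_of_lt (posf_lt_posf.2 h')

lemma posf_succ (i : ℕ) : posf (i+1) = posf i + (2*i + 4) := by unfold posf; ring

lemma posf_lt_wlen {i n : ℕ} : posf i < wlen n ↔ i ≤ n := by
  unfold posf wlen
  constructor <;> intro h <;> nlinarith

lemma apos_odd {p : ℕ} (h : apos p) : ¬ Even p := by
  obtain ⟨i, rfl⟩ := h
  rcases Nat.even_or_odd i with ⟨m, rfl⟩ | ⟨m, rfl⟩ <;>
    [ (have : posf (m+m) = 2*(2*m*m+3*m)+1 := by unfold posf; ring);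
      (have : posf (2*m+1) = 2*(2*m*m+5*m+2)+1 := by unfold posf; ring)] <;>
    rw [this] <;> simp [Nat.even_add_one, parity_simps]

lemma not_apos_succ_succ {p : ℕ} (h : apos p) : ¬ apos (p+2) := by
  obtain ⟨i, rfl⟩ := h
  rintro ⟨j, hj⟩
  have hij : i < j := by rw [← posf_lt_posf]; omega
  have h1 := posf_succ i
  have h2 : posf (i+1) ≤ posf j := posf_le_posf hij
  omega

lemma apos_window {n p : ℕ} (h1 : wlen n ≤ p) (h2 : p < wlen n + (2*n + 3)) : ¬ apos p := by
  rintro ⟨i, rfl⟩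
  have hi : n < i := by
    by_contra h
    push_neg at h
    have : posf i ≤ posf n := posf_le_posf h
    unfold posf wlen at *; omega
  have : posf (n+1) ≤ posf i := posf_le_posf hi
  unfold posf wlen at *
  nlinarith
section FP
variable {M : Bool → Type*} [∀ b, Group (M b)] (a : M true) (b : M false)

/-- the `p`-th letter of the reduced word for `g_n` -/
noncomputable def lett (p : ℕ) : Σ i, M i :=
  if Even p then ⟨false, b⟩ else if apos p then ⟨true, a⟩ else ⟨true, a⁻¹⟩

noncomputable def wlist (n : ℕ) : List (Σ i, M i) :=
  (List.range (wlen n)).map (lett a b)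

lemma lett_even {p : ℕ} (h : Even p) : lett a b p = ⟨false, b⟩ := if_pos h

lemma lett_apos {p : ℕ} (h : apos p) : lett a b p = ⟨true, a⟩ := by
  rw [lett, if_neg (by simpa using apos_odd h), if_pos h]

lemma lett_odd_napos {p : ℕ} (h : ¬ Even p) (h' : ¬ apos p) :
    lett a b p = ⟨true, a⁻¹⟩ := by rw [lett, if_neg h, if_neg h']

lemma lett_fst (p : ℕ) : (lett a b p).1 = if Even p then false else true := by
  rw [lett]; split_ifs <;> rfl

variable (ha1 : a ≠ 1) (hb : b ≠ 1)

/-- the reduced word for `g_n` -/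
noncomputable def wword (n : ℕ) : Word M where
  toList := wlist a b n
  ne_one := by
    intro l hl
    rw [wlist, List.mem_map] at hl
    obtain ⟨p, _, rfl⟩ := hl
    by_cases he : Even p
    · rw [lett_even a b he]; simpa
    · by_cases hp : apos p
      · rw [lett_apos a b hp]; simpa
      · rw [lett_odd_napos a b he hp]; simpa
  chain_ne := by
    rw [wlist, List.isChain_map]
    rw [List.isChain_iff_getElem]
    intro i h
    simp only [List.get_eq_getElem, List.getElem_range]
    intro hfst
    rw [lett_fst, lett_fst] at hfst
    rcases Nat.even_or_odd i with he | ho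
    · rw [if_pos he, if_neg (by simp [Nat.even_add_one, he])] at hfst; exact Bool.noConfusion hfst
    · rw [if_neg (by simpa using ho), if_pos (by simp [Nat.even_add_one]; simpa using ho)] at hfst
      exact Bool.noConfusion hfst

end FP
section FP2
variable {M : Bool → Type*} [∀ b, Group (M b)] (a : M true) (b : M false)

/-- product of an alternating `b, a⁻¹` block -/
lemma alt_prod (c : ℕ) (hc : Even c) :
    ∀ m : ℕ, (∀ q < 2*m, ¬ apos (c + q)) →
    ((List.range (2*m)).map (fun q => CoprodI.of ((lett a b (c + q)).2))).prod
      = (CoprodI.of b * CoprodI.of a⁻¹) ^ m := by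
  intro m
  induction m with
  | zero => intro _; simp
  | succ m ih =>
    intro h
    have h2m : 2*(m+1) = (2*m+1)+1 := by ring
    rw [h2m, List.range_succ, List.range_succ, List.map_append, List.map_append,
      List.prod_append, List.prod_append, ih (fun q hq => h q (by omega))]
    have he : Even (c + 2*m) := by rcases hc with ⟨t, rfl⟩; exact ⟨t+m, by ring⟩
    have ho : ¬ Even (c + (2*m+1)) := by
      rw [show c + (2*m+1) = (c+2*m)+1 from by ring, Nat.even_add_one]; simpa using he
    simp only [List.map_cons, List.map_nil, List.prod_cons, List.prod_nil]
    rw [show lett a b (c + 2*m) = ⟨false, b⟩ from lett_even a b he]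
    rw [show lett a b (c + (2*m+1)) = ⟨true, a⁻¹⟩ from
      lett_odd_napos a b ho (h _ (by omega))]
    simp [pow_succ, mul_assoc]

lemma wword_prod (n : ℕ) :
    ((List.range (wlen n)).map (fun p => CoprodI.of ((lett a b p).2))).prod
      = ((List.range n).map (fun i =>
          (CoprodI.of b * CoprodI.of a) * (CoprodI.of b * CoprodI.of a⁻¹) ^ (i + 1))).prod
        * (CoprodI.of b * CoprodI.of a) := by
  induction n with
  | zero =>
    have : wlen 0 = 2 := rfl
    rw [this]
    have h0 : lett a b 0 = ⟨false, b⟩ := lett_even a b (by simp)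
    have h1 : lett a b 1 = ⟨true, a⟩ := lett_apos a b ⟨0, rfl⟩
    have hr : List.range 2 = [0, 1] := rfl
    rw [hr]
    simp only [List.map_cons, List.map_nil, List.prod_cons, List.prod_nil]
    rw [h0, h1]
    simp
  | succ n ih =>
    have hsplit : wlen (n+1) = wlen n + (2*n+4) := by unfold wlen; ring
    rw [hsplit, List.range_add, List.map_append, List.prod_append, ih]
    have hsplit2 : 2*n+4 = ((2*(n+1))+1)+1 := by ring
    rw [hsplit2, List.range_succ, List.range_succ, List.map_append, List.map_append,
      List.map_append, List.map_append, List.prod_append, List.prod_append]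
    have hwlen_even : Even (wlen n) := by
      unfold wlen
      rcases Nat.even_or_odd n with ⟨t, rfl⟩ | ⟨t, rfl⟩
      · exact ⟨2*t*t+3*t+1, by ring⟩
      · exact ⟨2*t*t+5*t+3, by ring⟩
    obtain ⟨t, ht⟩ := id hwlen_even
    have hmap : (List.range (2*(n+1))).map ((fun p => CoprodI.of ((lett a b p).2)) ∘ (wlen n + ·))
        = (List.range (2*(n+1))).map (fun q => CoprodI.of ((lett a b (wlen n + q)).2)) := rfl
    rw [List.map_map, hmap, alt_prod a b (wlen n) hwlen_even (n+1)
      (fun q hq => apos_window (n := n) (by omega) (by omega))]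
    have hb' : lett a b (wlen n + (2*(n+1))) = ⟨false, b⟩ := by
      apply lett_even
      exact ⟨t+n+1, by omega⟩
    have ha' : lett a b (wlen n + (2*(n+1)+1)) = ⟨true, a⟩ := by
      apply lett_apos
      exact ⟨n+1, by unfold wlen posf; ring⟩
    rw [List.range_succ, List.map_append, List.prod_append]
    simp only [List.map_cons, List.map_nil, Function.comp]
    rw [hb', ha']
    simp [pow_succ, mul_assoc]

end FP2
section FP3
variable {M : Bool → Type*} [∀ b, Group (M b)] (a : M true) (b : M false)

lemma syllables_eq_wlist (ha1 : a ≠ 1) (hb : b ≠ 1) (n : ℕ) :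
    syllables (((List.range n).map (fun i =>
        (CoprodI.of b * CoprodI.of a) * (CoprodI.of b * CoprodI.of a⁻¹) ^ (i + 1))).prod
      * (CoprodI.of b * CoprodI.of a)) = wlist a b n := by
  rw [← wword_prod a b n]
  have h1 : ((List.range (wlen n)).map (fun p => CoprodI.of ((lett a b p).2))).prod
      = (wword a b ha1 hb n).prod := by
    rw [Word.prod]
    rw [wword]
    show _ = (List.map (fun l => CoprodI.of l.snd) (wlist a b n)).prod
    rw [wlist, List.map_map]
    rfl
  rw [h1, syllables]
  have h2 : ∀ (d1 : DecidableEq Bool) (d2 : ∀ i, DecidableEq (M i)),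
      (@Word.equiv Bool M _ d1 d2 ((wword a b ha1 hb n).prod)).toList = wlist a b n := by
    intro d1 d2
    rw [show (wword a b ha1 hb n).prod = (@Word.equiv Bool M _ d1 d2).symm (wword a b ha1 hb n)
      from rfl, Equiv.apply_symm_apply]
    rfl
  exact h2 _ _

lemma wlist_get (n p : ℕ) (hp : p < wlen n) :
    (wlist a b n)[p]? = some (lett a b p) := by
  rw [wlist, List.getElem?_map, List.getElem?_range hp]
  rfl

lemma wlist_get_none (n p : ℕ) (hp : wlen n ≤ p) : (wlist a b n)[p]? = none := by
  apply List.getElem?_eq_none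
  simpa [wlist]

lemma wlist_getA (ha2 : a ≠ a⁻¹) (n p : ℕ) :
    (wlist a b n)[p]? = some ⟨true, a⟩ ↔ p < wlen n ∧ apos p := by
  constructor
  · intro h
    by_cases hp : p < wlen n
    · refine ⟨hp, ?_⟩
      rw [wlist_get a b n p hp] at h
      have h' : lett a b p = ⟨true, a⟩ := by simpa using h
      by_cases he : Even p
      · rw [lett_even a b he] at h'; simp at h'
      · by_cases hap : apos p
        · exact hap
        · rw [lett_odd_napos a b he hap] at h'
          rw [Sigma.ext_iff] at h'
          exact absurd (eq_of_heq h'.2).symm ha2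
    · rw [wlist_get_none a b n p (by omega)] at h
      exact nomatch h
  · rintro ⟨hp, hap⟩
    rw [wlist_get a b n p hp, lett_apos a b hap]

lemma wlist_getAinv (ha2 : a ≠ a⁻¹) (n p : ℕ) :
    (wlist a b n)[p]? = some ⟨true, a⁻¹⟩ ↔ p < wlen n ∧ ¬ Even p ∧ ¬ apos p := by
  constructor
  · intro h
    by_cases hp : p < wlen n
    · refine ⟨hp, ?_⟩
      rw [wlist_get a b n p hp] at h
      have h' : lett a b p = ⟨true, a⁻¹⟩ := by simpa using h
      by_cases he : Even p
      · rw [lett_even a b he] at h'; simp at h'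
      · by_cases hap : apos p
        · rw [lett_apos a b hap] at h'
          rw [Sigma.ext_iff] at h'
          exact absurd (eq_of_heq h'.2) ha2
        · exact ⟨he, hap⟩
    · rw [wlist_get_none a b n p (by omega)] at h
      exact nomatch h
  · rintro ⟨hp, he, hap⟩
    rw [wlist_get a b n p hp, lett_odd_napos a b he hap]

lemma wlist_length (n : ℕ) : (wlist a b n).length = wlen n := by simp [wlist]

end FP3
section FP4
variable {M : Bool → Type*} [∀ b, Group (M b)] (a : M true) (b : M false)

lemma memA (ha2 : a ≠ a⁻¹) (n k : ℕ) (pq : ℕ × ℕ) :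
    (pq ∈ (Finset.range (wlen n) ×ˢ Finset.range (wlen n)).filter
      (fun pq => pq.1 < pq.2 ∧ (wlist a b n)[pq.1]? = some ⟨true, a⟩ ∧
        (wlist a b n)[pq.2]? = some ⟨true, a⟩ ∧
        (∀ r ∈ Finset.Ioo pq.1 pq.2, (wlist a b n)[r]? ≠ some ⟨true, a⟩) ∧
        pq.2 - pq.1 = 2*k+2)) ↔
    ∃ i, pq.1 = posf i ∧ pq.2 = posf (i+1) ∧ posf (i+1) < wlen n ∧ i + 1 = k := by
  obtain ⟨p, q⟩ := pq
  rw [Finset.mem_filter, Finset.mem_product, Finset.mem_range, Finset.mem_range]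
  simp only
  constructor
  · rintro ⟨⟨hp, hq⟩, hlt, hA1, hA2, hmid, hgap⟩
    obtain ⟨-, i, rfl⟩ := (wlist_getA a b ha2 n p).1 hA1
    obtain ⟨-, j, rfl⟩ := (wlist_getA a b ha2 n q).1 hA2
    have hij : i < j := posf_lt_posf.1 hlt
    have hj : j = i + 1 := by
      by_contra hne
      have h1 : i + 1 < j := by omega
      have h2 : posf (i+1) ∈ Finset.Ioo (posf i) (posf j) := by
        rw [Finset.mem_Ioo]
        exact ⟨posf_lt_posf.2 (by omega), posf_lt_posf.2 h1⟩
      exact hmid _ h2 ((wlist_getA a b ha2 n _).2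
        ⟨lt_trans (posf_lt_posf.2 h1) hq, ⟨i+1, rfl⟩⟩)
    subst hj
    have := posf_succ i
    exact ⟨i, rfl, rfl, hq, by omega⟩
  · rintro ⟨i, rfl, rfl, hq, rfl⟩
    have hsucc := posf_succ i
    have hlt : posf i < posf (i+1) := posf_lt_posf.2 (by omega)
    refine ⟨⟨lt_trans hlt hq, hq⟩, hlt, ?_, ?_, ?_, by omega⟩
    · exact (wlist_getA a b ha2 n _).2 ⟨lt_trans hlt hq, ⟨i, rfl⟩⟩
    · exact (wlist_getA a b ha2 n _).2 ⟨hq, ⟨i+1, rfl⟩⟩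
    · intro r hr hcon
      rw [Finset.mem_Ioo] at hr
      obtain ⟨-, m, rfl⟩ := (wlist_getA a b ha2 n r).1 hcon
      have h1 : i < m := posf_lt_posf.1 hr.1
      have h2 : m < i + 1 := posf_lt_posf.1 hr.2
      omega

lemma countA (ha2 : a ≠ a⁻¹) (n k : ℕ) :
    ((Finset.range (wlen n) ×ˢ Finset.range (wlen n)).filter
      (fun pq => pq.1 < pq.2 ∧ (wlist a b n)[pq.1]? = some ⟨true, a⟩ ∧
        (wlist a b n)[pq.2]? = some ⟨true, a⟩ ∧
        (∀ r ∈ Finset.Ioo pq.1 pq.2, (wlist a b n)[r]? ≠ some ⟨true, a⟩) ∧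
        pq.2 - pq.1 = 2*k+2)).card = if 1 ≤ k ∧ k ≤ n then 1 else 0 := by
  split_ifs with hk
  · rw [Finset.card_eq_one]
    refine ⟨(posf (k-1), posf k), ?_⟩
    ext pq
    rw [memA a b ha2, Finset.mem_singleton]
    constructor
    · rintro ⟨i, h1, h2, h3, h4⟩
      have hik : i = k - 1 := by omega
      subst hik
      have : k - 1 + 1 = k := by omega
      rw [this] at h2
      rw [Prod.ext_iff]
      exact ⟨h1, h2⟩
    · rintro rfl
      refine ⟨k-1, rfl, by rw [show k-1+1 = k from by omega], ?_, by omega⟩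
      rw [show k-1+1 = k from by omega]
      exact posf_lt_wlen.2 hk.2
  · rw [Finset.card_eq_zero, Finset.eq_empty_iff_forall_notMem]
    intro pq hmem
    obtain ⟨i, -, -, h3, rfl⟩ := (memA a b ha2 n _ pq).1 hmem
    exact hk ⟨by omega, by have := posf_lt_wlen.1 h3; omega⟩

lemma countAinv (ha2 : a ≠ a⁻¹) (n k : ℕ) (hk : 2 ≤ k) :
    ((Finset.range (wlen n) ×ˢ Finset.range (wlen n)).filter
      (fun pq => pq.1 < pq.2 ∧ (wlist a b n)[pq.1]? = some ⟨true, a⁻¹⟩ ∧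
        (wlist a b n)[pq.2]? = some ⟨true, a⁻¹⟩ ∧
        (∀ r ∈ Finset.Ioo pq.1 pq.2, (wlist a b n)[r]? ≠ some ⟨true, a⁻¹⟩) ∧
        pq.2 - pq.1 = 2*k+2)).card = 0 := by
  rw [Finset.card_eq_zero, Finset.eq_empty_iff_forall_notMem]
  rintro ⟨p, q⟩ hmem
  rw [Finset.mem_filter, Finset.mem_product, Finset.mem_range, Finset.mem_range] at hmem
  obtain ⟨⟨hp, hq⟩, hlt, hA1, hA2, hmid, hgap⟩ := hmem
  obtain ⟨-, hodd, -⟩ := (wlist_getAinv a b ha2 n p).1 hA1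
  have hq6 : p + 6 ≤ q := by omega
  have key : ∀ r, p < r → r + 1 < q → ¬ Even r → apos r := by
    intro r h1 h2 he
    by_contra hap
    exact hmid r (Finset.mem_Ioo.2 ⟨h1, by omega⟩)
      ((wlist_getAinv a b ha2 n r).2 ⟨by omega, he, hap⟩)
  have h2 : apos (p+2) := key _ (by omega) (by omega)
    (by rw [show p+2 = (p+1)+1 from rfl] at *; simp [Nat.even_add_one]; simpa using hodd)
  have h4 : apos (p+4) := key _ (by omega) (by omega)
    (by simp [show p+4 = (p+2)+2 from rfl, Nat.even_add_one, parity_simps]; simpa using hodd)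
  exact not_apos_succ_succ h2 (by rw [show p+2+2 = p+4 from rfl]; exact h4)

end FP4

/-- For `g_n = v w v w² ⋯ v wⁿ v` with `v = ba`, `w = ba⁻¹`:
`d_0(g_n) = 0`, `d_k(g_n) = 1` for `1 ≤ k ≤ n`, `d_k(g_n) = 0` for `k > n`,
`d*_k(g_n) = 0` for `k ≥ 2`; consequently `Δ₁(g_n) ≥ n - 1`. -/
theorem Delta1_unbounded_sequence {M : Bool → Type*} [∀ b, Group (M b)]
    (a : M true) (b : M false) (ha1 : a ≠ 1) (ha2 : a ≠ a⁻¹) (hb : b ≠ 1)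
    (n : ℕ) (hn : 1 ≤ n) :
    letI v : CoprodI M := CoprodI.of b * CoprodI.of a
    letI w : CoprodI M := CoprodI.of b * CoprodI.of a⁻¹
    letI gn : CoprodI M := ((List.range n).map (fun i => v * w ^ (i + 1))).prod * v
    segCount ⟨true, a⟩ 0 gn = 0 ∧
    (∀ k : ℕ, 1 ≤ k → k ≤ n → segCount ⟨true, a⟩ k gn = 1) ∧
    (∀ k : ℕ, n < k → segCount ⟨true, a⟩ k gn = 0) ∧
    (∀ k : ℕ, 2 ≤ k → segCount ⟨true, a⁻¹⟩ k gn = 0) ∧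
    n - 1 ≤ Delta1 a gn := by
  set gn : CoprodI M := ((List.range n).map (fun i =>
      (CoprodI.of b * CoprodI.of a) * (CoprodI.of b * CoprodI.of a⁻¹) ^ (i + 1))).prod
      * (CoprodI.of b * CoprodI.of a) with hgn
  have hsyl : syllables gn = wlist a b n := syllables_eq_wlist a b ha1 hb n
  have hsegA : ∀ k : ℕ, segCount ⟨true, a⟩ k gn = if 1 ≤ k ∧ k ≤ n then 1 else 0 := by
    intro k
    rw [segCount]
    simp only [hsyl, wlist_length]
    exact countA a b ha2 n k
  have hsegAinv : ∀ k : ℕ, 2 ≤ k → segCount ⟨true, a⁻¹⟩ k gn = 0 := by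
    intro k hk
    rw [segCount]
    simp only [hsyl, wlist_length]
    exact countAinv a b ha2 n k hk
  refine ⟨by rw [hsegA]; simp, fun k h1 h2 => by rw [hsegA, if_pos ⟨h1, h2⟩],
    fun k hk => by rw [hsegA, if_neg (by omega)], hsegAinv, ?_⟩
  -- the Delta1 bound
  set c : ℕ → ℕ := fun k => if Odd ((segCount ⟨true, a⟩ k gn : ℤ) - segCount ⟨true, a⁻¹⟩ k gn)
    then 1 else 0 with hc
  have hD : Delta1 a gn = ∑ᶠ k : ℕ, c k := rfl
  have hsupp : Function.support c ⊆ ↑(Finset.range (n+1)) := by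
    intro k hk
    simp only [Finset.coe_range, Set.mem_Iio]
    by_contra h
    push_neg at h
    have h1 : segCount ⟨true, a⟩ k gn = 0 := by rw [hsegA, if_neg (by omega)]
    have h2 : segCount ⟨true, a⁻¹⟩ k gn = 0 := hsegAinv k (by omega)
    apply hk
    rw [hc]
    simp [h1, h2]
  rw [hD, finsum_eq_sum_of_support_subset c hsupp]
  have hsub : Finset.Icc 2 n ⊆ Finset.range (n+1) := by
    intro k hk
    rw [Finset.mem_Icc] at hk
    rw [Finset.mem_range]
    omega
  have hone : ∀ k ∈ Finset.Icc 2 n, c k = 1 := by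
    intro k hk
    rw [Finset.mem_Icc] at hk
    have h1 : segCount ⟨true, a⟩ k gn = 1 := by rw [hsegA, if_pos ⟨by omega, hk.2⟩]
    have h2 : segCount ⟨true, a⁻¹⟩ k gn = 0 := hsegAinv k hk.1
    show c k = 1
    rw [hc]
    simp [h1, h2]
  calc n - 1 = ∑ k ∈ Finset.Icc 2 n, c k := by
        rw [Finset.sum_congr rfl hone, Finset.sum_const, Nat.card_Icc, smul_eq_mul]
        omega
    _ ≤ ∑ k ∈ Finset.range (n+1), c k := Finset.sum_le_sum_of_subset hsub
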